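/- For every integer n ≥ 2, the action of SL(2,ℂ) on R_{n−1} is irreducible: the only ℂ-subspaces of R_{n−1} invariant under the action of every element of SL(2,ℂ) are 0 and R_{n−1}. -/

import Mathlib

open Polynomial

/-- The matrix (in the ordered basis `X^(l-1) Y^(n-l)`, `1 ≤ l ≤ n`, of homogeneous
polynomials of degree `n-1`) of the action of `A = [[a,b],[c,d]]` determined by
`A · X = d X - b Y` and `A · Y = -c X + a Y`. -/
noncomputable def rn (n : ℕ) (A : Matrix (Fin 2) (Fin 2) ℂ) : Matrix (Fin n) (Fin n) ℂ :=
  Matrix.of fun j l =>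
    ((Polynomial.C (A 1 1) * Polynomial.X - Polynomial.C (A 0 1)) ^ (l : ℕ) *
      (Polynomial.C (-A 1 0) * Polynomial.X + Polynomial.C (A 0 0)) ^ (n - 1 - (l : ℕ))).coeff j

lemma rn_apply_aux (n : ℕ) (A : Matrix (Fin 2) (Fin 2) ℂ) (j l : Fin n) :
    rn n A j l = ((C (A 1 1) * X - C (A 0 1)) ^ (l : ℕ) *
      (C (-A 1 0) * X + C (A 0 0)) ^ (n - 1 - (l : ℕ))).coeff j := rfl

/-- Vandermonde extraction: if `W` contains the vectors `j ↦ (s k)^(m j) * a j` for an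
injective family `s` of `n` scalars, then it contains each "slice" of `a` along a level
set of `m`. -/
lemma extract_aux {n : ℕ} (s : Fin n → ℂ) (hs : Function.Injective s)
    (a : Fin n → ℂ) (m : Fin n → ℕ) (hm : ∀ j, m j < n)
    (W : Submodule ℂ (Fin n → ℂ))
    (hu : ∀ k : Fin n, (fun j => s k ^ m j * a j) ∈ W) (e : Fin n) :
    (fun j => if (e : ℕ) = m j then a j else 0) ∈ W := by
  set V := Matrix.vandermonde s with hVdef
  have hV : V⁻¹ * V = 1 :=
    Matrix.nonsing_inv_mul V (isUnit_iff_ne_zero.mpr (Matrix.det_vandermonde_ne_zero_iff.mpr hs))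
  have key : (fun j => if (e : ℕ) = m j then a j else 0) =
      ∑ k, V⁻¹ e k • (fun j => s k ^ m j * a j) := by
    funext j
    have h2 : (V⁻¹ * V) e ⟨m j, hm j⟩ = ∑ k, V⁻¹ e k * s k ^ m j := by
      simp [Matrix.mul_apply, hVdef, Matrix.vandermonde]
    rw [hV, Matrix.one_apply] at h2
    have h3 : ∑ k, V⁻¹ e k * (s k ^ m j * a j) = (∑ k, V⁻¹ e k * s k ^ m j) * a j := by
      rw [Finset.sum_mul]; exact Finset.sum_congr rfl fun k _ => by ring
    simp only [Finset.sum_apply, Pi.smul_apply, smul_eq_mul]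
    rw [h3, ← h2]
    by_cases h : (e : ℕ) = m j
    · simp [Fin.ext_iff, h]
    · simp [Fin.ext_iff, h]
  rw [key]
  exact Submodule.sum_smul_mem W _ fun k _ => hu k

lemma rn_diag_aux (n : ℕ) (t : ℂ) (j l : Fin n) :
    rn n !![t, 0; 0, t⁻¹] j l =
      if (j : ℕ) = l then t⁻¹ ^ (l : ℕ) * t ^ (n - 1 - (l : ℕ)) else 0 := by
  rw [rn_apply_aux]
  have e0 : (!![t, 0; 0, t⁻¹] : Matrix (Fin 2) (Fin 2) ℂ) 1 1 = t⁻¹ := rfl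
  have e1 : (!![t, 0; 0, t⁻¹] : Matrix (Fin 2) (Fin 2) ℂ) 0 1 = 0 := rfl
  have e2 : (!![t, 0; 0, t⁻¹] : Matrix (Fin 2) (Fin 2) ℂ) 1 0 = 0 := rfl
  have e3 : (!![t, 0; 0, t⁻¹] : Matrix (Fin 2) (Fin 2) ℂ) 0 0 = t := rfl
  rw [e0, e1, e2, e3]
  have h : (C t⁻¹ * X - C (0:ℂ)) ^ (l:ℕ) * (C (-(0:ℂ)) * X + C t) ^ (n-1-(l:ℕ))
      = C (t⁻¹ ^ (l:ℕ) * t ^ (n-1-(l:ℕ))) * X ^ (l:ℕ) := by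
    rw [map_zero, neg_zero, map_zero, sub_zero, zero_mul, zero_add, mul_pow, ← C_pow, ← C_pow,
      C_mul]
    ring
  rw [h, coeff_C_mul, coeff_X_pow]
  split_ifs <;> simp_all [Fin.ext_iff]

lemma rn_upper_aux (n : ℕ) (b : ℂ) (j l : Fin n) :
    rn n !![1, b; 0, 1] j l = (-b) ^ ((l : ℕ) - j) * ((l : ℕ).choose j : ℂ) := by
  rw [rn_apply_aux]
  have e0 : (!![(1:ℂ), b; 0, 1] : Matrix (Fin 2) (Fin 2) ℂ) 1 1 = 1 := rfl
  have e1 : (!![(1:ℂ), b; 0, 1] : Matrix (Fin 2) (Fin 2) ℂ) 0 1 = b := rfl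
  have e2 : (!![(1:ℂ), b; 0, 1] : Matrix (Fin 2) (Fin 2) ℂ) 1 0 = 0 := rfl
  have e3 : (!![(1:ℂ), b; 0, 1] : Matrix (Fin 2) (Fin 2) ℂ) 0 0 = 1 := rfl
  rw [e0, e1, e2, e3]
  have h : (C (1:ℂ) * X - C b) = X + C (-b) := by
    rw [C_1, one_mul, map_neg, sub_eq_add_neg]
  rw [h, neg_zero, map_zero, zero_mul, zero_add, C_1, one_pow, mul_one, coeff_X_add_C_pow]

lemma coeff_C_mul_X_add_one_pow_aux (a : ℂ) (m k : ℕ) :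
    ((C a * X + 1) ^ m).coeff k = a ^ k * (m.choose k : ℂ) := by
  rw [add_pow, finset_sum_coeff]
  simp only [one_pow, mul_one, mul_pow, ← C_pow, ← C_eq_natCast, coeff_mul_C, coeff_C_mul,
    coeff_X_pow]
  rw [Finset.sum_eq_single k]
  · by_cases h : k ≤ m
    · simp
    · simp [Nat.choose_eq_zero_of_lt (by omega : m < k)]
  · intro i _ hik
    simp [Ne.symm hik]
  · intro h
    simp only [Finset.mem_range, not_lt] at h
    simp [Nat.choose_eq_zero_of_lt (by omega : m < k)]

lemma rn_lower_aux (n : ℕ) (c : ℂ) (j : Fin n) (h0 : (0:ℕ) < n) :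
    rn n !![1, 0; c, 1] j ⟨0, h0⟩ = (-c) ^ (j : ℕ) * ((n - 1).choose j : ℂ) := by
  rw [rn_apply_aux]
  have e2 : (!![(1:ℂ), 0; c, 1] : Matrix (Fin 2) (Fin 2) ℂ) 1 0 = c := rfl
  have e3 : (!![(1:ℂ), 0; c, 1] : Matrix (Fin 2) (Fin 2) ℂ) 0 0 = 1 := rfl
  rw [e2, e3, C_1]
  simp only [pow_zero, one_mul, Nat.sub_zero]
  rw [coeff_C_mul_X_add_one_pow_aux]

/-- For every `n ≥ 2`, the action of `SL(2,ℂ)` on the homogeneous polynomials of degree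
`n-1` (identified with `ℂⁿ` via the monomial basis, the action of `A` being `rₙ(A)`) is
irreducible: the only invariant subspaces are `0` and the whole space. -/
theorem rn_irreducible (n : ℕ) (hn : 2 ≤ n) (W : Submodule ℂ (Fin n → ℂ))
    (hW : ∀ A : Matrix.SpecialLinearGroup (Fin 2) ℂ, ∀ w ∈ W,
      (rn n (A : Matrix (Fin 2) (Fin 2) ℂ)).mulVec w ∈ W) :
    W = ⊥ ∨ W = ⊤ := by
  by_cases hbot : W = ⊥
  · exact Or.inl hbot
  right
  obtain ⟨w, hw, hw0⟩ := (Submodule.ne_bot_iff W).mp hbot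
  obtain ⟨j0, hj0⟩ : ∃ j, w j ≠ 0 := Function.ne_iff.mp hw0
  -- the injective family of scalars used repeatedly
  set s2 : Fin n → ℂ := fun k => ((k : ℕ) : ℂ) with hs2def
  have hs2 : Function.Injective s2 := by
    intro k1 k2 h
    simp only [hs2def, Nat.cast_inj] at h
    exact Fin.ext h
  ------------------------------------------------------------------
  -- Step A : some standard basis vector lies in W
  ------------------------------------------------------------------
  have hdiag : ∀ t : ℂ, t ≠ 0 → (fun j : Fin n => (t ^ 2) ^ (n - 1 - (j : ℕ)) * w j) ∈ W := by
    intro t ht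
    have hdet : Matrix.det !![t, 0; 0, t⁻¹] = 1 := by
      rw [Matrix.det_fin_two_of]; field_simp; simp
    have h1 : (rn n !![t, 0; 0, t⁻¹]).mulVec w ∈ W := hW ⟨_, hdet⟩ w hw
    have h2 := W.smul_mem (t ^ (n - 1)) h1
    have h3 : (t ^ (n - 1)) • (rn n !![t, 0; 0, t⁻¹]).mulVec w =
        fun j : Fin n => (t ^ 2) ^ (n - 1 - (j : ℕ)) * w j := by
      funext j
      have hmv : (rn n !![t, 0; 0, t⁻¹]).mulVec w j
          = t⁻¹ ^ (j : ℕ) * t ^ (n - 1 - (j : ℕ)) * w j := by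
        rw [Matrix.mulVec, dotProduct, Finset.sum_eq_single j]
        · rw [rn_diag_aux, if_pos rfl]
        · intro l _ hlj
          rw [rn_diag_aux, if_neg (fun h => hlj (Fin.ext h.symm)), zero_mul]
        · simp
      rw [Pi.smul_apply, hmv, smul_eq_mul]
      have hj : (j : ℕ) ≤ n - 1 := by omega
      have hsplit : t ^ (n - 1) = t ^ (j : ℕ) * t ^ (n - 1 - (j : ℕ)) := by
        rw [← pow_add]; congr 1; omega
      have hsq : ((t ^ 2) ^ (n - 1 - (j : ℕ))) = t ^ (n - 1 - (j : ℕ)) * t ^ (n - 1 - (j : ℕ)) := by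
        rw [← pow_add, ← pow_mul]; ring_nf
      have hc : t ^ (j : ℕ) * (t ^ (j : ℕ))⁻¹ = 1 := mul_inv_cancel₀ (pow_ne_zero _ ht)
      rw [hsplit, hsq, inv_pow]
      calc t ^ (j:ℕ) * t ^ (n-1-(j:ℕ)) * ((t ^ (j:ℕ))⁻¹ * t ^ (n-1-(j:ℕ)) * w j)
          = (t ^ (j:ℕ) * (t ^ (j:ℕ))⁻¹) * (t ^ (n-1-(j:ℕ)) * t ^ (n-1-(j:ℕ)) * w j) := by ring
        _ = t ^ (n-1-(j:ℕ)) * t ^ (n-1-(j:ℕ)) * w j := by rw [hc, one_mul]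
    rw [h3] at h2
    exact h2
  have huA : ∀ k : Fin n,
      (fun j : Fin n => ((((k : ℕ) + 1) ^ 2 : ℕ) : ℂ) ^ (n - 1 - (j : ℕ)) * w j) ∈ W := by
    intro k
    have ht : ((k : ℕ) + 1 : ℂ) ≠ 0 := by exact_mod_cast Nat.succ_ne_zero (k : ℕ)
    have := hdiag ((k : ℕ) + 1 : ℂ) ht
    convert this using 2 with j
    push_cast
    ring
  have hsA : Function.Injective (fun k : Fin n => ((((k : ℕ) + 1) ^ 2 : ℕ) : ℂ)) := by
    intro k1 k2 h
    simp only [Nat.cast_inj] at h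
    have := Nat.pow_left_injective (n := 2) (by omega) h
    exact Fin.ext (by omega)
  have hA := extract_aux _ hsA w (fun j => n - 1 - (j : ℕ)) (fun j => by show n - 1 - (j:ℕ) < n; omega) W huA
    ⟨n - 1 - (j0 : ℕ), by omega⟩
  have hB : Pi.single j0 (1 : ℂ) ∈ W := by
    have h4 := W.smul_mem (w j0)⁻¹ hA
    have h5 : (w j0)⁻¹ • (fun j : Fin n =>
        if ((⟨n - 1 - (j0 : ℕ), by omega⟩ : Fin n) : ℕ) = n - 1 - (j : ℕ) then w j else 0)
        = Pi.single j0 (1 : ℂ) := by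
      funext j
      rw [Pi.smul_apply, smul_eq_mul, Pi.single_apply]
      by_cases hj : j = j0
      · subst hj
        rw [if_pos rfl, if_pos rfl, inv_mul_cancel₀ hj0]
      · have hval : (j : ℕ) ≠ (j0 : ℕ) := fun h => hj (Fin.ext h)
        have : ¬ (n - 1 - (j0 : ℕ) = n - 1 - (j : ℕ)) := by
          have := j.isLt; have := j0.isLt; omega
        rw [if_neg this, if_neg hj, mul_zero]
    rw [h5] at h4
    exact h4
  ------------------------------------------------------------------
  -- Step B : the first basis vector lies in W
  ------------------------------------------------------------------
  have huB : ∀ k : Fin n,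
      (fun j : Fin n => s2 k ^ ((j0 : ℕ) - (j : ℕ)) * (((j0 : ℕ)).choose j : ℂ)) ∈ W := by
    intro k
    have hdet : Matrix.det !![(1:ℂ), -(s2 k); 0, 1] = 1 := by
      rw [Matrix.det_fin_two_of]; ring
    have h1 := hW ⟨_, hdet⟩ _ hB
    have h2 : (rn n !![(1:ℂ), -(s2 k); 0, 1]).mulVec (Pi.single j0 (1:ℂ))
        = fun j : Fin n => s2 k ^ ((j0 : ℕ) - (j : ℕ)) * (((j0 : ℕ)).choose j : ℂ) := by
      rw [Matrix.mulVec_single]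
      funext j
      rw [Pi.smul_apply, MulOpposite.op_one, one_smul]
      change rn n !![(1:ℂ), -(s2 k); 0, 1] j j0 = _
      rw [rn_upper_aux, neg_neg]
    rw [h2] at h1
    exact h1
  have hC := extract_aux s2 hs2 (fun j : Fin n => (((j0 : ℕ)).choose j : ℂ))
    (fun j => (j0 : ℕ) - (j : ℕ)) (fun j => by show (j0:ℕ) - (j:ℕ) < n; have := j0.isLt; omega) W huB j0
  have hD : Pi.single (⟨0, by omega⟩ : Fin n) (1 : ℂ) ∈ W := by
    have h5 : (fun j : Fin n => if (j0 : ℕ) = (j0 : ℕ) - (j : ℕ) then (((j0 : ℕ)).choose j : ℂ)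
        else 0) = Pi.single (⟨0, by omega⟩ : Fin n) (1 : ℂ) := by
      funext j
      rw [Pi.single_apply]
      by_cases hj : (j : ℕ) = 0
      · have hj' : j = (⟨0, by omega⟩ : Fin n) := Fin.ext hj
        rw [if_pos hj', hj, Nat.sub_zero, if_pos rfl, Nat.choose_zero_right, Nat.cast_one]
      · have hj' : j ≠ (⟨0, by omega⟩ : Fin n) := fun h => hj (by rw [h])
        rw [if_neg hj']
        by_cases h : (j0 : ℕ) = (j0 : ℕ) - (j : ℕ)
        · rw [if_pos h]
          have : (j0 : ℕ) < (j : ℕ) := by omega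
          rw [Nat.choose_eq_zero_of_lt this, Nat.cast_zero]
        · rw [if_neg h]
    rw [h5] at hC
    exact hC
  ------------------------------------------------------------------
  -- Step C : every basis vector lies in W
  ------------------------------------------------------------------
  have huC : ∀ k : Fin n,
      (fun j : Fin n => s2 k ^ (j : ℕ) * (((n - 1).choose j : ℕ) : ℂ)) ∈ W := by
    intro k
    have hdet : Matrix.det !![(1:ℂ), 0; -(s2 k), 1] = 1 := by
      rw [Matrix.det_fin_two_of]; ring
    have h1 := hW ⟨_, hdet⟩ _ hD
    have h2 : (rn n !![(1:ℂ), 0; -(s2 k), 1]).mulVec (Pi.single (⟨0, by omega⟩ : Fin n) (1:ℂ))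
        = fun j : Fin n => s2 k ^ (j : ℕ) * (((n - 1).choose j : ℕ) : ℂ) := by
      rw [Matrix.mulVec_single]
      funext j
      rw [Pi.smul_apply, MulOpposite.op_one, one_smul]
      change rn n !![(1:ℂ), 0; -(s2 k), 1] j (⟨0, by omega⟩ : Fin n) = _
      rw [rn_lower_aux _ _ _ (by omega), neg_neg]
    rw [h2] at h1
    exact h1
  have hbasis : ∀ i : Fin n, (fun j : Fin n => if i = j then (1:ℂ) else 0) ∈ W := by
    intro i
    have hE := extract_aux s2 hs2 (fun j : Fin n => (((n - 1).choose j : ℕ) : ℂ))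
      (fun j => (j : ℕ)) (fun j => j.isLt) W huC i
    have hch : (((n - 1).choose i : ℕ) : ℂ) ≠ 0 := by
      have : 0 < (n - 1).choose i := Nat.choose_pos (by have := i.isLt; omega)
      exact_mod_cast this.ne'
    have h4 := W.smul_mem (((n - 1).choose i : ℕ) : ℂ)⁻¹ hE
    have h5 : (((n - 1).choose i : ℕ) : ℂ)⁻¹ • (fun j : Fin n =>
        if (i : ℕ) = (j : ℕ) then (((n - 1).choose j : ℕ) : ℂ) else 0)
        = fun j : Fin n => if i = j then (1:ℂ) else 0 := by
      funext j
      rw [Pi.smul_apply, smul_eq_mul]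
      by_cases hj : i = j
      · subst hj
        rw [if_pos rfl, if_pos rfl, inv_mul_cancel₀ hch]
      · rw [if_neg (fun h => hj (Fin.ext h)), if_neg hj, mul_zero]
    rw [h5] at h4
    exact h4
  rw [Submodule.eq_top_iff']
  intro x
  rw [pi_eq_sum_univ x]
  exact Submodule.sum_smul_mem W _ fun i _ => hbasis i
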